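/- For positive integers k and m, sg(K_{⟨k^m⟩}) ≤ ⌈2m/(k+1)⌉ · k, where K_{⟨k^m⟩} is the complete multipartite graph with m parts each of size k. -/

import Mathlib

/-- A selection of fixed geodesics between pairs of vertices of `S`:
each element of `P` is a walk whose endpoints lie in `S`, which is a shortest path,
with at most one walk per ordered pair of endpoints, and with the walks chosen for
the two orderings of a pair being reverses of each other. -/
def IsGeodesicSelection {V : Type*} (G : SimpleGraph V) (S : Set V)
    (P : Set ((u : V) × (v : V) × G.Walk u v)) : Prop :=
  (∀ q ∈ P, q.1 ∈ S ∧ q.2.1 ∈ S ∧ q.2.2.IsPath ∧ q.2.2.length = G.dist q.1 q.2.1) ∧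
  (∀ q ∈ P, ∀ q' ∈ P,
    (q.1 = q'.1 ∧ q.2.1 = q'.2.1 → q = q') ∧
    (q.1 = q'.2.1 ∧ q.2.1 = q'.1 → q.2.2.support = q'.2.2.support.reverse))

/-- `S` is a strong geodetic set of `G` if one can fix one shortest path between
each pair of vertices of `S` so that all vertices of `G` are covered. -/
def IsStrongGeodeticSet {V : Type*} (G : SimpleGraph V) (S : Set V) : Prop :=
  ∃ P, IsGeodesicSelection G S P ∧ ∀ w : V, ∃ q ∈ P, w ∈ q.2.2.support

/-- The strong geodetic number: minimum size of a strong geodetic set. -/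
noncomputable def strongGeodeticNumber {V : Type*} (G : SimpleGraph V) : ℕ :=
  sInf {k | ∃ S : Set V, S.ncard = k ∧ IsStrongGeodeticSet G S}

namespace SGaux
open SimpleGraph

lemma univ_isStrongGeodeticSet {V : Type*} (G : SimpleGraph V) :
    IsStrongGeodeticSet G Set.univ := by
  refine ⟨{q | ∃ u : V, q = ⟨u, u, .nil⟩}, ⟨?_, ?_⟩, ?_⟩
  · rintro q ⟨u, rfl⟩
    simp [SimpleGraph.dist_self]
  · rintro q ⟨u, rfl⟩ q' ⟨u', rfl⟩
    constructor
    · rintro ⟨rfl, -⟩; rfl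
    · rintro ⟨rfl, -⟩; simp
  · intro w; exact ⟨⟨w, w, .nil⟩, ⟨w, rfl⟩, by simp⟩


abbrev Gm (k m : ℕ) : SimpleGraph ((_ : Fin m) × Fin k) :=
  SimpleGraph.completeMultipartiteGraph (fun _ : Fin m => Fin k)

abbrev Vkm (k m : ℕ) := (_ : Fin m) × Fin k
abbrev Pairs (k t : ℕ) := Fin t × {s : Finset (Fin k) // s.card = 2}
abbrev Outs (k m t : ℕ) := {v : Vkm k m // t ≤ v.1.1}

variable {k m t : ℕ}

lemma gm_adj {u v : Vkm k m} : (Gm k m).Adj u v ↔ u.1 ≠ v.1 := by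
  simp [Gm]

def walk2 (u v w : Vkm k m) (h1 : u.1 ≠ w.1) (h2 : w.1 ≠ v.1) :
    (Gm k m).Walk u v :=
  .cons (gm_adj.2 h1) (.cons (gm_adj.2 h2) .nil)

lemma dist_two (u v : Vkm k m) (h : u.1 = v.1) (hne : u ≠ v)
    (w : Vkm k m) (hw : u.1 ≠ w.1) : (Gm k m).dist u v = 2 := by
  have h2 : w.1 ≠ v.1 := fun hh => hw (h ▸ hh.symm)
  have hle : (Gm k m).dist u v ≤ 2 := by
    simpa [walk2] using SimpleGraph.dist_le (walk2 u v w hw h2)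
  have h0 : (Gm k m).dist u v ≠ 0 :=
    Nat.pos_iff_ne_zero.mp ((walk2 u v w hw h2).reachable.pos_dist_of_ne hne)
  have h1 : (Gm k m).dist u v ≠ 1 := fun hc => by
    have := gm_adj.mp (SimpleGraph.dist_eq_one_iff_adj.mp hc)
    exact this h
  omega

variable (hk : 0 < k) (htm : t < m) (e : Outs k m t ↪ Pairs k t)

noncomputable def midOf (p : Pairs k t) : Vkm k m :=
  if h : ∃ w, e w = p then h.choose.1 else ⟨⟨t, htm⟩, ⟨0, hk⟩⟩

lemma midOf_out (p : Pairs k t) : t ≤ (midOf hk htm e p).1.1 := by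
  unfold midOf
  split
  · next h => exact h.choose.2
  · exact le_refl t

lemma midOf_e (w : Outs k m t) : midOf hk htm e (e w) = w.1 := by
  have hex : ∃ w', e w' = e w := ⟨w, rfl⟩
  have : hex.choose = w := e.injective hex.choose_spec
  simp only [midOf, dif_pos hex, this]

def pairOf (u v : Vkm k m) (h : u.1.1 < t) (hne : u.2 ≠ v.2) : Pairs k t :=
  (⟨u.1.1, h⟩, ⟨{u.2, v.2}, Finset.card_pair hne⟩)

lemma pairOf_comm (u v : Vkm k m) (h1 : u.1.1 < t) (h2 : v.1.1 < t)
    (huv : u.1 = v.1) (hne : u.2 ≠ v.2) :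
    pairOf u v h1 hne = pairOf v u h2 hne.symm := by
  unfold pairOf
  refine Prod.ext (Fin.ext ?_) (Subtype.ext ?_)
  · simp [huv]
  · exact Finset.pair_comm _ _

lemma fst_ne_of_lt_of_mid (u : Vkm k m) (h : u.1.1 < t) (p : Pairs k t) :
    u.1 ≠ (midOf hk htm e p).1 := fun hc => by
  have := midOf_out hk htm e p
  rw [← hc] at this
  omega

noncomputable def gwalk (u v : Vkm k m) (h : u.1.1 < t) (huv : u.1 = v.1)
    (hne : u.2 ≠ v.2) : (Gm k m).Walk u v :=
  walk2 u v (midOf hk htm e (pairOf u v h hne))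
    (fst_ne_of_lt_of_mid hk htm e u h _)
    (fun hc => fst_ne_of_lt_of_mid hk htm e v (huv ▸ h) (pairOf u v h hne) (hc.symm))

lemma gwalk_support (u v : Vkm k m) (h : u.1.1 < t) (huv : u.1 = v.1)
    (hne : u.2 ≠ v.2) :
    (gwalk hk htm e u v h huv hne).support = [u, midOf hk htm e (pairOf u v h hne), v] := rfl

lemma sigma_ne_of_snd_ne {u v : Vkm k m} (h : u.2 ≠ v.2) : u ≠ v :=
  fun hc => h (congrArg (fun x : Vkm k m => x.2) hc)

lemma sigma_ne_of_fst_ne {u v : Vkm k m} (h : u.1 ≠ v.1) : u ≠ v :=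
  fun hc => h (congrArg Sigma.fst hc)

include hk htm in
set_option linter.unusedSectionVars false in
lemma main (hcard : Fintype.card (Outs k m t) ≤ Fintype.card (Pairs k t)) :
    IsStrongGeodeticSet (Gm k m) {v : Vkm k m | v.1.1 < t} := by
  obtain ⟨e⟩ := Function.Embedding.nonempty_of_card_le hcard
  refine ⟨{q | ∃ u : Vkm k m, u.1.1 < t ∧ q = ⟨u, u, .nil⟩} ∪
          {q | ∃ (u v : Vkm k m) (h : u.1.1 < t) (huv : u.1 = v.1) (hne : u.2 ≠ v.2),
            q = ⟨u, v, gwalk hk htm e u v h huv hne⟩}, ⟨?_, ?_⟩, ?_⟩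
  · rintro q (⟨u, hu, rfl⟩ | ⟨u, v, h, huv, hne, rfl⟩)
    · exact ⟨hu, hu, .nil, (SimpleGraph.dist_self).symm⟩
    · refine ⟨h, by simpa [← huv] using h, ?_, ?_⟩
      · rw [SimpleGraph.Walk.isPath_def, gwalk_support]
        have h1 := fst_ne_of_lt_of_mid hk htm e u h (pairOf u v h hne)
        have h2 := fst_ne_of_lt_of_mid hk htm e v (huv ▸ h) (pairOf u v h hne)
        have n1 : u ≠ midOf hk htm e (pairOf u v h hne) := sigma_ne_of_fst_ne h1
        have n2 : u ≠ v := sigma_ne_of_snd_ne hne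
        have n3 : midOf hk htm e (pairOf u v h hne) ≠ v :=
          sigma_ne_of_fst_ne (fun hc => h2 hc.symm)
        simp [n1, n2, n3]
      · show (2 : ℕ) = _
        exact (dist_two u v huv (sigma_ne_of_snd_ne hne)
          (midOf hk htm e (pairOf u v h hne))
          (fst_ne_of_lt_of_mid hk htm e u h (pairOf u v h hne))).symm
  · rintro q (⟨u, hu, rfl⟩ | ⟨u, v, h, huv, hne, rfl⟩) q'
      (⟨u', hu', rfl⟩ | ⟨u', v', h', huv', hne', rfl⟩)
    · constructor
      · rintro ⟨rfl, -⟩; rfl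
      · rintro ⟨rfl, -⟩; simp
    · constructor
      · rintro ⟨h1, h2⟩
        exact absurd (congrArg (fun x : Vkm k m => x.2) (h1.symm.trans h2)) hne'
      · rintro ⟨h1, h2⟩
        exact absurd (congrArg (fun x : Vkm k m => x.2) (h2.symm.trans h1)) hne'
    · constructor
      · rintro ⟨h1, h2⟩
        exact absurd (congrArg (fun x : Vkm k m => x.2) (h1.trans h2.symm)) hne
      · rintro ⟨h1, h2⟩
        exact absurd (congrArg (fun x : Vkm k m => x.2) (h1.trans h2.symm)) hne
    · constructor
      · rintro ⟨h1, h2⟩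
        dsimp only at h1 h2
        subst h1; subst h2
        rfl
      · rintro ⟨h1, h2⟩
        dsimp only at h1 h2
        subst h1; subst h2
        have hcom : pairOf v u h' hne' = pairOf u v h hne :=
          pairOf_comm v u h' h huv' hne'
        rw [gwalk_support, gwalk_support, hcom]
        simp
  · intro w
    by_cases hw : w.1.1 < t
    · exact ⟨⟨w, w, .nil⟩, Or.inl ⟨w, hw, rfl⟩, by simp⟩
    · have hwt : t ≤ w.1.1 := le_of_not_gt hw
      set p := e ⟨w, hwt⟩ with hp
      obtain ⟨a, b, hab, hs⟩ := Finset.card_eq_two.mp p.2.2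
      have hi : (p.1 : ℕ) < m := lt_trans p.1.2 htm
      refine ⟨⟨⟨⟨p.1.1, hi⟩, a⟩, ⟨⟨p.1.1, hi⟩, b⟩,
        gwalk hk htm e ⟨⟨p.1.1, hi⟩, a⟩ ⟨⟨p.1.1, hi⟩, b⟩ p.1.2 rfl hab⟩,
        Or.inr ⟨⟨⟨p.1.1, hi⟩, a⟩, ⟨⟨p.1.1, hi⟩, b⟩, p.1.2, rfl, hab, rfl⟩, ?_⟩
      have hpair : pairOf (⟨⟨p.1.1, hi⟩, a⟩ : Vkm k m) ⟨⟨p.1.1, hi⟩, b⟩ p.1.2 hab = p := by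
        refine Prod.ext (Fin.ext rfl) (Subtype.ext ?_)
        exact hs.symm
      have hmid : midOf hk htm e p = w := by rw [hp]; exact midOf_e hk htm e ⟨w, hwt⟩
      rw [gwalk_support, hpair, hmid]
      simp

lemma card_pairs (k t : ℕ) : Fintype.card (Pairs k t) = t * Nat.choose k 2 := by
  simp [Fintype.card_finset_len]

lemma card_outs (k m t : ℕ) : Fintype.card (Outs k m t) ≤ (m - t) * k := by
  have f : Outs k m t ↪ Fin (m - t) × Fin k := by
    refine ⟨fun v => (⟨v.1.1.1 - t, by have := v.1.1.2; have := v.2; omega⟩, v.1.2), ?_⟩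
    rintro ⟨⟨⟨i1, hi1⟩, b1⟩, h1⟩ ⟨⟨⟨i2, hi2⟩, b2⟩, h2⟩ hxy
    simp only [Prod.mk.injEq, Fin.mk.injEq] at hxy
    have h1' : t ≤ i1 := h1
    have h2' : t ≤ i2 := h2
    have : i1 = i2 := by omega
    exact Subtype.ext (Sigma.ext (Fin.ext this) (heq_of_eq hxy.2))
  simpa using Fintype.card_le_of_embedding f

lemma card_univ_vkm (k m : ℕ) : Nat.card (Vkm k m) = m * k := by
  simp [Nat.card_eq_fintype_card, mul_comm]

lemma ncard_slab_le (k m t : ℕ) : ({v : Vkm k m | v.1.1 < t}).ncard ≤ t * k := by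
  have f : {v : Vkm k m | v.1.1 < t} ↪ Fin t × Fin k := by
    refine ⟨fun v => (⟨v.1.1.1, v.2⟩, v.1.2), ?_⟩
    rintro ⟨⟨⟨i1, hi1⟩, b1⟩, h1⟩ ⟨⟨⟨i2, hi2⟩, b2⟩, h2⟩ hxy
    simp only [Prod.mk.injEq, Fin.mk.injEq] at hxy
    exact Subtype.ext (Sigma.ext (Fin.ext hxy.1) (heq_of_eq hxy.2))
  calc ({v : Vkm k m | v.1.1 < t}).ncard = Nat.card {v : Vkm k m | v.1.1 < t} := rfl
    _ ≤ Nat.card (Fin t × Fin k) := Finite.card_le_of_embedding f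
    _ = t * k := by simp [Nat.card_eq_fintype_card]

lemma arith (k m t : ℕ) (hk : 0 < k) (h2m : 2 * m ≤ t * (k + 1)) :
    (m - t) * k ≤ t * Nat.choose k 2 := by
  have heven : Even (k * (k - 1)) := by
    rcases Nat.even_or_odd k with h | h
    · exact h.mul_right _
    · exact ((Nat.Odd.sub_odd h odd_one)).mul_left _
  have hch : Nat.choose k 2 * 2 = k * (k - 1) := by
    rw [Nat.choose_two_right]
    exact Nat.div_mul_cancel heven.two_dvd
  have h1 : 2 * (m - t) ≤ t * (k - 1) := by
    have e1 : t * (k + 1) = t * k + t := by ring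
    have e2 : t * (k - 1) = t * k - t := by
      cases k with
      | zero => omega
      | succ n => simp [Nat.succ_sub_one, Nat.mul_succ]
    rw [e1] at h2m
    rw [e2]
    omega
  have h3 : 2 * ((m - t) * k) ≤ 2 * (t * Nat.choose k 2) := by
    calc 2 * ((m - t) * k) = (2 * (m - t)) * k := by ring
      _ ≤ (t * (k - 1)) * k := Nat.mul_le_mul_right _ h1
      _ = (k * (k - 1)) * t := by ring
      _ = (Nat.choose k 2 * 2) * t := by rw [hch]
      _ = 2 * (t * Nat.choose k 2) := by ring
  exact le_of_mul_le_mul_left h3 (by norm_num)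


end SGaux

theorem sg_balanced_multipartite_upper (k m : ℕ) (hk : 0 < k) (hm : 0 < m) :
    (strongGeodeticNumber (SimpleGraph.completeMultipartiteGraph (fun _ : Fin m => Fin k)) : ℤ) ≤
      ⌈(2 * m : ℚ) / (k + 1)⌉ * k := by
  set T : ℤ := ⌈(2 * m : ℚ) / (k + 1)⌉ with hT
  have hkq : (0 : ℚ) < (k : ℚ) + 1 := by positivity
  have hmq : (0 : ℚ) < (m : ℚ) := by exact_mod_cast hm
  have hle : (2 * m : ℚ) / (k + 1) ≤ (T : ℚ) := Int.le_ceil _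
  have hTpos : 0 < T := by
    rw [hT]
    exact Int.ceil_pos.mpr (by positivity)
  set t : ℕ := T.toNat with ht
  have htT : (t : ℤ) = T := Int.toNat_of_nonneg hTpos.le
  have h2m : 2 * m ≤ t * (k + 1) := by
    have h1 : (2 * m : ℚ) ≤ (T : ℚ) * ((k : ℚ) + 1) := by
      rwa [div_le_iff₀ hkq] at hle
    have htq : ((t : ℕ) : ℚ) = (T : ℚ) := by exact_mod_cast htT
    rw [← htq] at h1
    exact_mod_cast h1
  have hex : ∃ n ∈ {n | ∃ S : Set (SGaux.Vkm k m), S.ncard = n ∧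
      IsStrongGeodeticSet (SGaux.Gm k m) S}, n ≤ t * k := by
    by_cases hcase : t < m
    · have hcard : Fintype.card (SGaux.Outs k m t) ≤ Fintype.card (SGaux.Pairs k t) :=
        calc Fintype.card (SGaux.Outs k m t) ≤ (m - t) * k := SGaux.card_outs k m t
          _ ≤ t * Nat.choose k 2 := SGaux.arith k m t hk h2m
          _ = Fintype.card (SGaux.Pairs k t) := (SGaux.card_pairs k t).symm
      exact ⟨_, ⟨_, rfl, SGaux.main hk hcase hcard⟩, SGaux.ncard_slab_le k m t⟩
    · refine ⟨_, ⟨Set.univ, rfl, SGaux.univ_isStrongGeodeticSet _⟩, ?_⟩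
      rw [Set.ncard_univ, SGaux.card_univ_vkm]
      exact Nat.mul_le_mul_right k (le_of_not_gt hcase)
  obtain ⟨n, hn, hnk⟩ := hex
  have hsInf : strongGeodeticNumber (SGaux.Gm k m) ≤ n := Nat.sInf_le hn
  have hfin : strongGeodeticNumber (SGaux.Gm k m) ≤ t * k := le_trans hsInf hnk
  calc (strongGeodeticNumber
        (SimpleGraph.completeMultipartiteGraph (fun _ : Fin m => Fin k)) : ℤ)
      ≤ ((t * k : ℕ) : ℤ) := by exact_mod_cast hfin
    _ = (t : ℤ) * (k : ℤ) := by push_cast; ring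
    _ = T * k := by rw [htT]
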